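/- For a positive definite matrix J and matrix H, the matrix J^{-1} − H(H'JH)^† H' equals J^{-1/2} Q_{J^{1/2}H} J^{-1/2} and is positive semidefinite, where Q_A = I − P_A is the orthogonal projection onto the orthogonal complement of span(A). -/

import Mathlib

open Matrix

open scoped ComplexOrder in
/-- The square root of a positive semidefinite matrix, as defined in Mathlib (Dec 2024)
(`Matrix.PosSemidef.sqrt`, since removed from Mathlib). -/
noncomputable def Matrix.PosSemidef.sqrt {n : Type*} [Fintype n] [DecidableEq n]
    {𝕜 : Type*} [RCLike 𝕜] {A : Matrix n n 𝕜} (hA : A.PosSemidef) : Matrix n n 𝕜 :=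
  hA.1.eigenvectorUnitary.1 * diagonal ((↑) ∘ (√·) ∘ hA.1.eigenvalues) *
  (star hA.1.eigenvectorUnitary : Matrix n n 𝕜)

open scoped ComplexOrder in
lemma Matrix.PosSemidef.sqrt_mul_self {n : Type*} [Fintype n] [DecidableEq n]
    {𝕜 : Type*} [RCLike 𝕜] {A : Matrix n n 𝕜} (hA : A.PosSemidef) :
    hA.sqrt * hA.sqrt = A := by
  have hU : (star hA.1.eigenvectorUnitary : Matrix n n 𝕜) * hA.1.eigenvectorUnitary.1 = 1 :=
    Unitary.coe_star_mul_self _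
  have hD : diagonal (((↑) ∘ (√·) ∘ hA.1.eigenvalues : n → 𝕜)) *
      diagonal ((↑) ∘ (√·) ∘ hA.1.eigenvalues) = diagonal (RCLike.ofReal ∘ hA.1.eigenvalues) := by
    rw [diagonal_mul_diagonal]
    congr 1
    funext i
    simp only [Function.comp_apply]
    rw [← RCLike.ofReal_mul, Real.mul_self_sqrt (hA.eigenvalues_nonneg i)]
  conv_rhs => rw [hA.1.spectral_theorem, Unitary.conjStarAlgAut_apply]
  unfold Matrix.PosSemidef.sqrt
  calc _ = hA.1.eigenvectorUnitary.1 * diagonal ((↑) ∘ (√·) ∘ hA.1.eigenvalues) *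
        ((star hA.1.eigenvectorUnitary : Matrix n n 𝕜) * hA.1.eigenvectorUnitary.1) *
        diagonal ((↑) ∘ (√·) ∘ hA.1.eigenvalues) *
        (star hA.1.eigenvectorUnitary : Matrix n n 𝕜) := by simp only [Matrix.mul_assoc]
    _ = _ := by rw [hU, Matrix.mul_one, Matrix.mul_assoc _ (diagonal _) (diagonal _), hD]

open scoped ComplexOrder in
lemma Matrix.PosSemidef.isHermitian_sqrt {n : Type*} [Fintype n] [DecidableEq n]
    {𝕜 : Type*} [RCLike 𝕜] {A : Matrix n n 𝕜} (hA : A.PosSemidef) :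
    hA.sqrt.IsHermitian := by
  unfold Matrix.PosSemidef.sqrt
  rw [IsHermitian, conjTranspose_mul, conjTranspose_mul, diagonal_conjTranspose]
  have : star ((↑) ∘ (√·) ∘ hA.1.eigenvalues : n → 𝕜) = (↑) ∘ (√·) ∘ hA.1.eigenvalues := by
    funext i; simp
  rw [this, Matrix.star_eq_conjTranspose, conjTranspose_conjTranspose, Matrix.mul_assoc]

/-- G is the Moore–Penrose inverse of A (the four Penrose conditions). -/
def IsMoorePenrose {m n : ℕ} (A : Matrix (Fin m) (Fin n) ℝ)
    (G : Matrix (Fin n) (Fin m) ℝ) : Prop :=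
  A * G * A = A ∧ G * A * G = G ∧ (A * G)ᵀ = A * G ∧ (G * A)ᵀ = G * A

lemma mp_unique {m n : ℕ} {A : Matrix (Fin m) (Fin n) ℝ}
    {G1 G2 : Matrix (Fin n) (Fin m) ℝ}
    (h1 : IsMoorePenrose A G1) (h2 : IsMoorePenrose A G2) : G1 = G2 := by
  obtain ⟨a1, b1, c1, d1⟩ := h1
  obtain ⟨a2, b2, c2, d2⟩ := h2
  have e1 : A * G1 = A * G2 := by
    calc A * G1 = A * G2 * A * G1 := by rw [a2]
      _ = (A * G2)ᵀ * (A * G1)ᵀ := by rw [c1, c2]; simp only [Matrix.mul_assoc]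
      _ = ((A * G1) * (A * G2))ᵀ := (transpose_mul _ _).symm
      _ = (A * G1 * A * G2)ᵀ := by simp only [Matrix.mul_assoc]
      _ = (A * G2)ᵀ := by rw [a1]
      _ = A * G2 := c2
  have e2 : G1 * A = G2 * A := by
    calc G1 * A = G1 * (A * G2 * A) := by rw [a2]
      _ = (G1 * A) * (G2 * A) := by simp only [Matrix.mul_assoc]
      _ = (G1 * A)ᵀ * (G2 * A)ᵀ := by rw [d1, d2]
      _ = ((G2 * A) * (G1 * A))ᵀ := (transpose_mul _ _).symm
      _ = (G2 * (A * G1 * A))ᵀ := by simp only [Matrix.mul_assoc]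
      _ = (G2 * A)ᵀ := by rw [a1]
      _ = G2 * A := d2
  calc G1 = G1 * A * G1 := b1.symm
    _ = G1 * (A * G1) := Matrix.mul_assoc _ _ _
    _ = G1 * (A * G2) := by rw [e1]
    _ = G1 * A * G2 := by simp only [Matrix.mul_assoc]
    _ = G2 * A * G2 := by rw [e2]
    _ = G2 := b2

/-- For positive definite J and matrix H, J⁻¹ − H(H'JH)⁺H' equals
J^{-1/2} Q_{J^{1/2}H} J^{-1/2} (where Q_A = I − P_A and
P_{J^{1/2}H} = J^{1/2}H(H'JH)⁺H'J^{1/2}) and is positive semidefinite. -/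
theorem stmt_12 {n k : ℕ} (J : Matrix (Fin n) (Fin n) ℝ) (hJ : J.PosDef)
    (H : Matrix (Fin n) (Fin k) ℝ) (G : Matrix (Fin k) (Fin k) ℝ)
    (hG : IsMoorePenrose (Hᵀ * J * H) G) :
    J⁻¹ - H * G * Hᵀ =
      (hJ.posSemidef.sqrt)⁻¹ *
        (1 - hJ.posSemidef.sqrt * H * G * Hᵀ * hJ.posSemidef.sqrt) *
        (hJ.posSemidef.sqrt)⁻¹ ∧
    (J⁻¹ - H * G * Hᵀ).PosSemidef := by
  set S := hJ.posSemidef.sqrt with hSdef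
  have hSS : S * S = J := hJ.posSemidef.sqrt_mul_self
  have hSt : Sᵀ = S := by
    rw [← conjTranspose_eq_transpose_of_trivial]
    exact hJ.posSemidef.isHermitian_sqrt
  have hJt : Jᵀ = J := by
    rw [← conjTranspose_eq_transpose_of_trivial]; exact hJ.isHermitian
  have hdet : IsUnit S.det := by
    have hJdet : J.det ≠ 0 := hJ.det_pos.ne'
    rw [← hSS, det_mul] at hJdet
    exact isUnit_iff_ne_zero.2 fun h => hJdet (by rw [h, zero_mul])
  have hinvS : S⁻¹ * S = 1 := nonsing_inv_mul S hdet
  have hSinv : S * S⁻¹ = 1 := mul_nonsing_inv S hdet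
  have hJinv : J⁻¹ = S⁻¹ * S⁻¹ := by rw [← hSS, Matrix.mul_inv_rev]
  -- G is symmetric
  have hA : (Hᵀ * J * H)ᵀ = Hᵀ * J * H := by
    rw [transpose_mul, transpose_mul, transpose_transpose, hJt, ← Matrix.mul_assoc]
  have hGt : IsMoorePenrose (Hᵀ * J * H) Gᵀ := by
    obtain ⟨a, b, c, d⟩ := hG
    set A := Hᵀ * J * H
    refine ⟨?_, ?_, ?_, ?_⟩
    · rw [← hA]
      simpa [transpose_mul, Matrix.mul_assoc] using congrArg Matrix.transpose a
    · rw [← hA]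
      simpa [transpose_mul, Matrix.mul_assoc] using congrArg Matrix.transpose b
    · have h : A * Gᵀ = G * A := by
        calc A * Gᵀ = Aᵀ * Gᵀ := by rw [hA]
          _ = (G * A)ᵀ := (transpose_mul _ _).symm
          _ = G * A := d
      rw [h, d]
    · have h : Gᵀ * A = A * G := by
        calc Gᵀ * A = Gᵀ * Aᵀ := by rw [hA]
          _ = (A * G)ᵀ := (transpose_mul _ _).symm
          _ = A * G := c
      rw [h, c]
  have hGsym : Gᵀ = G := mp_unique hGt hG
  -- the projection
  set P := S * H * G * Hᵀ * S with hPdef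
  have hPt : Pᵀ = P := by
    rw [hPdef]
    simp only [transpose_mul, transpose_transpose, hSt, hGsym]
    simp only [Matrix.mul_assoc]
  have hPP : P * P = P := by
    have key : Hᵀ * S * (S * H) = Hᵀ * J * H := by
      rw [← hSS]; simp only [Matrix.mul_assoc]
    calc P * P = S * H * (G * (Hᵀ * S * (S * H)) * G) * Hᵀ * S := by
          rw [hPdef]; simp only [Matrix.mul_assoc]
      _ = S * H * (G * (Hᵀ * J * H) * G) * Hᵀ * S := by rw [key]
      _ = P := by rw [hG.2.1, hPdef]; try simp only [Matrix.mul_assoc]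
  have hQ : (1 - P).PosSemidef := by
    have hfac : 1 - P = (1 - P)ᴴ * (1 - P) := by
      rw [conjTranspose_eq_transpose_of_trivial, transpose_sub, transpose_one, hPt]
      simp only [Matrix.mul_sub, Matrix.sub_mul, Matrix.mul_one, Matrix.one_mul, hPP]
      abel
    rw [hfac]
    exact posSemidef_conjTranspose_mul_self _
  have hinvH : (S⁻¹)ᴴ = S⁻¹ := by
    rw [conjTranspose_eq_transpose_of_trivial, transpose_nonsing_inv, hSt]
  have heq : J⁻¹ - H * G * Hᵀ = S⁻¹ * (1 - P) * S⁻¹ := by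
    rw [Matrix.mul_sub, Matrix.sub_mul, Matrix.mul_one, hJinv]
    congr 1
    symm
    calc S⁻¹ * P * S⁻¹ = (S⁻¹ * S) * (H * G * Hᵀ * (S * S⁻¹)) := by
          rw [hPdef]; simp only [Matrix.mul_assoc]
      _ = H * G * Hᵀ := by
          rw [hinvS, hSinv, Matrix.one_mul, Matrix.mul_one]
  refine ⟨heq, ?_⟩
  rw [heq]
  have h2 := hQ.mul_mul_conjTranspose_same S⁻¹
  rwa [hinvH] at h2
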